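/- Let X be a square-integrable martingale and F a C² bounded function with bounded derivatives. Then along a sequence of partitions with mesh → 0 of [t,s], the sums ∑_j |E[F(X̃_{T-t_{j+1}}) - F(X̃_{T-t_j})]|² are bounded by K² ∑_j E[|X̃_{T-t_{j+1}} - X̃_{T-t_j}|⁴] (via Cauchy–Schwarz on the inner expectation), and hence tend to 0 since the quartic variation of the continuous L⁴ martingale X̃ vanishes. -/

import Mathlib

open MeasureTheory Filter

open scoped ENNReal NNReal

section AuxSt19

variable {Ω : Type*} {m0 : MeasurableSpace Ω} {P : Measure Ω} [IsProbabilityMeasure P]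
  {ℱ : Filtration ℝ m0} {X : ℝ → Ω → ℝ}

lemma aux_integrable_mul {f g : Ω → ℝ} (hf : MemLp f 2 P) (hg : MemLp g 2 P) :
    Integrable (fun ω => f ω * g ω) P := by
  have h : (1 : ℝ≥0∞) / 1 = 1 / 2 + 1 / 2 := by
    rw [one_div_one, ENNReal.add_halves]
  have h2 : MemLp (f • g) 1 P := hg.smul hf
  have h3 := h2.integrable le_rfl
  exact h3

lemma aux_orth (hMart : Martingale X ℱ P) {i j : ℝ} (hij : i ≤ j)
    {f : Ω → ℝ} (hfm : StronglyMeasurable[ℱ i] f)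
    (hfi : Integrable (f * (X j - X i)) P) :
    ∫ ω, f ω * (X j ω - X i ω) ∂P = 0 := by
  have hXji : Integrable (X j - X i) P := (hMart.integrable j).sub (hMart.integrable i)
  have hpull : P[f * (X j - X i)|ℱ i] =ᵐ[P] f * P[X j - X i|ℱ i] :=
    condExp_mul_of_stronglyMeasurable_left hfm hfi hXji
  have hcond0 : P[X j - X i|ℱ i] =ᵐ[P] 0 := by
    have h1 : P[X j - X i|ℱ i] =ᵐ[P] P[X j|ℱ i] - P[X i|ℱ i] :=
      condExp_sub (hMart.integrable j) (hMart.integrable i) _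
    have h2 : P[X j|ℱ i] =ᵐ[P] X i := hMart.condExp_ae_eq hij
    have h3 : P[X i|ℱ i] = X i :=
      condExp_of_stronglyMeasurable (ℱ.le i) (hMart.stronglyAdapted i) (hMart.integrable i)
    filter_upwards [h1, h2] with ω h1ω h2ω
    simp only [Pi.sub_apply, Pi.zero_apply] at *
    rw [h1ω, h2ω, h3]
    ring
  have hmain : ∫ ω, (f * (X j - X i)) ω ∂P = ∫ ω, (0:ℝ) ∂P := by
    rw [← integral_condExp (ℱ.le i) (f := f * (X j - X i))]
    refine integral_congr_ae ?_
    filter_upwards [hpull, hcond0] with ω hω h0ω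
    simp only [hω, Pi.mul_apply, h0ω, Pi.zero_apply, mul_zero]
  simpa using hmain


lemma aux_sq_increment (hMart : Martingale X ℱ P) (hL4 : ∀ r, MemLp (X r) 4 P)
    {i j : ℝ} (hij : i ≤ j) :
    ∫ ω, (X j ω - X i ω)^2 ∂P = (∫ ω, (X j ω)^2 ∂P) - ∫ ω, (X i ω)^2 ∂P := by
  have m2 : ∀ r, MemLp (X r) 2 P := fun r => (hL4 r).mono_exponent (by norm_num)
  have hji2 : MemLp (X j - X i) 2 P := (m2 j).sub (m2 i)
  have hprod : Integrable (fun ω => X i ω * (X j ω - X i ω)) P :=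
    aux_integrable_mul (m2 i) hji2
  have hsqj := (m2 j).integrable_sq
  have hsqi := (m2 i).integrable_sq
  have horth : ∫ ω, X i ω * (X j ω - X i ω) ∂P = 0 :=
    aux_orth hMart hij (hMart.stronglyAdapted i) hprod
  have key : ∀ ω, (X j ω - X i ω)^2
      = (X j ω)^2 - (X i ω)^2 - 2*(X i ω * (X j ω - X i ω)) := fun ω => by ring
  calc ∫ ω, (X j ω - X i ω)^2 ∂P
      = ∫ ω, ((X j ω)^2 - (X i ω)^2 - 2*(X i ω * (X j ω - X i ω))) ∂P := by
        exact integral_congr_ae (Filter.Eventually.of_forall fun ω => key ω)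
    _ = (∫ ω, (X j ω)^2 ∂P) - ∫ ω, (X i ω)^2 ∂P := by
        have hsub1 : Integrable (fun ω => X j ω ^ 2 - X i ω ^ 2) P := hsqj.sub hsqi
        rw [integral_sub hsub1 (hprod.const_mul 2), integral_sub hsqj hsqi,
          MeasureTheory.integral_const_mul, horth]
        ring

lemma aux_h_mono (hMart : Martingale X ℱ P) (hL4 : ∀ r, MemLp (X r) 4 P)
    {i j : ℝ} (hij : i ≤ j) :
    ∫ ω, (X i ω)^2 ∂P ≤ ∫ ω, (X j ω)^2 ∂P := by
  have h := aux_sq_increment hMart hL4 hij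
  have h2 : 0 ≤ ∫ ω, (X j ω - X i ω)^2 ∂P := integral_nonneg fun ω => sq_nonneg _
  linarith

lemma aux_jensen {Y : Ω → ℝ} (hY : MemLp Y 2 P) :
    (∫ ω, Y ω ∂P)^2 ≤ ∫ ω, (Y ω)^2 ∂P := by
  have h := ProbabilityTheory.variance_nonneg Y P
  rw [ProbabilityTheory.variance_eq_sub hY] at h
  simp only [Pi.pow_apply] at h
  linarith


open intervalIntegral in
lemma aux_taylor {F : ℝ → ℝ} (hF : ContDiff ℝ 2 F) {K : ℝ}
    (hF'' : ∀ y, |deriv (deriv F) y| ≤ 2 * K) (a b : ℝ) :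
    |F b - F a - deriv F a * (b - a)| ≤ K * (b - a) ^ 2 := by
  have hK2 : 0 ≤ 2 * K := le_trans (abs_nonneg _) (hF'' 0)
  have hK : 0 ≤ K := by linarith
  have hd : Differentiable ℝ F := hF.differentiable (by norm_num)
  have hF1 : ContDiff ℝ 1 (deriv F) := by
    have h2 : ContDiff ℝ (1 + 1) F := by convert hF using 2; norm_num
    exact (contDiff_succ_iff_deriv.mp h2).2.2
  have hd' : Differentiable ℝ (deriv F) := hF1.differentiable (by norm_num)
  have hcont' : Continuous (deriv F) := hF1.continuous
  have hlip : LipschitzWith ‖2 * K‖₊ (deriv F) := by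
    refine lipschitzWith_of_nnnorm_deriv_le hd' fun x => ?_
    rw [← NNReal.coe_le_coe, coe_nnnorm, coe_nnnorm, Real.norm_eq_abs, Real.norm_eq_abs]
    exact (hF'' x).trans (le_abs_self _)
  have hlip' : ∀ x y : ℝ, |deriv F x - deriv F y| ≤ 2 * K * |x - y| := by
    intro x y
    have := hlip.dist_le_mul x y
    rw [Real.dist_eq, Real.dist_eq] at this
    calc |deriv F x - deriv F y| ≤ ‖(2*K : ℝ)‖ * |x - y| := this
      _ = 2 * K * |x - y| := by rw [Real.norm_eq_abs, abs_of_nonneg hK2]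
  have hFTC : F b - F a = ∫ x in a..b, deriv F x := by
    rw [integral_deriv_eq_sub (fun x _ => hd x) (hcont'.intervalIntegrable a b)]
  have hconst : deriv F a * (b - a) = ∫ _ in a..b, deriv F a := by
    rw [intervalIntegral.integral_const, smul_eq_mul]; ring
  have hrepr : F b - F a - deriv F a * (b - a) = ∫ x in a..b, (deriv F x - deriv F a) := by
    rw [integral_sub (hcont'.intervalIntegrable a b) (intervalIntegrable_const), hFTC, hconst]
  rw [hrepr]
  rcases le_total a b with hab | hab
  · have hbnd : ∀ᵐ t ∂(MeasureTheory.volume.restrict (Set.uIoc a b)),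
        ‖deriv F t - deriv F a‖ ≤ 2 * K * (t - a) := by
      rw [Set.uIoc_of_le hab]
      refine (ae_restrict_iff' measurableSet_Ioc).mpr (Filter.Eventually.of_forall ?_)
      intro t ht
      rw [Real.norm_eq_abs]
      calc |deriv F t - deriv F a| ≤ 2 * K * |t - a| := hlip' t a
        _ = 2 * K * (t - a) := by rw [abs_of_nonneg (by linarith [ht.1])]
    have hgint : IntervalIntegrable (fun t => 2 * K * (t - a)) MeasureTheory.volume a b :=
      (Continuous.intervalIntegrable (by continuity) a b)
    have := intervalIntegral.norm_integral_le_abs_of_norm_le hbnd hgint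
    rw [Real.norm_eq_abs] at this
    refine this.trans ?_
    have hval : ∫ t in a..b, 2 * K * (t - a) = K * (b - a)^2 := by
      rw [intervalIntegral.integral_const_mul]
      have : ∫ t in a..b, (t - a) = (b^2 - a^2)/2 - (b - a) * a := by
        rw [integral_sub (Continuous.intervalIntegrable (by continuity) a b)
          intervalIntegrable_const, integral_id, intervalIntegral.integral_const, smul_eq_mul]
      rw [this]; ring
    rw [hval, abs_of_nonneg (by positivity)]
  · have hbnd : ∀ᵐ t ∂(MeasureTheory.volume.restrict (Set.uIoc a b)),
        ‖deriv F t - deriv F a‖ ≤ 2 * K * (a - t) := by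
      rw [Set.uIoc_of_ge hab]
      refine (ae_restrict_iff' measurableSet_Ioc).mpr (Filter.Eventually.of_forall ?_)
      intro t ht
      rw [Real.norm_eq_abs]
      calc |deriv F t - deriv F a| ≤ 2 * K * |t - a| := hlip' t a
        _ = 2 * K * (a - t) := by rw [abs_of_nonpos (by linarith [ht.2])]; ring
    have hgint : IntervalIntegrable (fun t => 2 * K * (a - t)) MeasureTheory.volume a b :=
      (Continuous.intervalIntegrable (by continuity) a b)
    have := intervalIntegral.norm_integral_le_abs_of_norm_le hbnd hgint
    rw [Real.norm_eq_abs] at this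
    refine this.trans ?_
    have hval : ∫ t in a..b, 2 * K * (a - t) = - (K * (b - a)^2) := by
      rw [intervalIntegral.integral_const_mul]
      have : ∫ t in a..b, (a - t) = (b - a) * a - (b^2 - a^2)/2 := by
        rw [integral_sub intervalIntegrable_const
          (Continuous.intervalIntegrable (by continuity) a b), integral_id,
          intervalIntegral.integral_const, smul_eq_mul]
      rw [this]; ring
    rw [hval, abs_neg, abs_of_nonneg (by positivity)]

lemma aux_expF (hMart : Martingale X ℱ P) (hL4 : ∀ r, MemLp (X r) 4 P)
    {F : ℝ → ℝ} (hF : ContDiff ℝ 2 F) {cF' : ℝ} (hF' : ∀ y, |deriv F y| ≤ cF')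
    {K : ℝ} (hF'' : ∀ y, |deriv (deriv F) y| ≤ 2 * K)
    (hFint : ∀ r : ℝ, Integrable (fun ω => F (X r ω)) P)
    {i j : ℝ} (hij : i ≤ j) :
    |∫ ω, (F (X j ω) - F (X i ω)) ∂P| ≤ K * ((∫ ω, (X j ω)^2 ∂P) - ∫ ω, (X i ω)^2 ∂P) := by
  have hK : 0 ≤ K := by
    have := le_trans (abs_nonneg _) (hF'' 0); linarith
  have m2 : ∀ r, MemLp (X r) 2 P := fun r => (hL4 r).mono_exponent (by norm_num)
  have sm : ∀ r, StronglyMeasurable (X r) := fun r => (hMart.stronglyAdapted r).mono (ℱ.le r)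
  have hcontF' : Continuous (deriv F) := hF.continuous_deriv (by norm_num)
  have hD1 : Integrable (fun ω => X j ω - X i ω) P :=
    (hMart.integrable j).sub (hMart.integrable i)
  have ht1m : AEStronglyMeasurable (fun ω => deriv F (X i ω)) P :=
    (hcontF'.comp_stronglyMeasurable (sm i)).aestronglyMeasurable
  have ht1int : Integrable (fun ω => deriv F (X i ω) * (X j ω - X i ω)) P := by
    refine Integrable.bdd_mul (c := cF') hD1 ht1m (Filter.Eventually.of_forall fun ω => ?_)
    rw [Real.norm_eq_abs]; exact hF' _
  have hRint : Integrable
      (fun ω => F (X j ω) - F (X i ω) - deriv F (X i ω) * (X j ω - X i ω)) P :=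
    ((hFint j).sub (hFint i)).sub ht1int
  have hT1zero : ∫ ω, deriv F (X i ω) * (X j ω - X i ω) ∂P = 0 := by
    refine aux_orth hMart hij (hcontF'.comp_stronglyMeasurable (hMart.stronglyAdapted i)) ?_
    exact ht1int
  have hFji : Integrable (fun ω => F (X j ω) - F (X i ω)) P := (hFint j).sub (hFint i)
  have hsplit : ∫ ω, (F (X j ω) - F (X i ω)) ∂P
      = ∫ ω, (F (X j ω) - F (X i ω) - deriv F (X i ω) * (X j ω - X i ω)) ∂P := by
    rw [integral_sub hFji ht1int, hT1zero, sub_zero]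
  have hsq_int : Integrable (fun ω => (X j ω - X i ω)^2) P :=
    ((m2 j).sub (m2 i)).integrable_sq
  have habs : |∫ ω, (F (X j ω) - F (X i ω) - deriv F (X i ω) * (X j ω - X i ω)) ∂P|
      ≤ ∫ ω, K * (X j ω - X i ω)^2 ∂P := by
    calc |∫ ω, (F (X j ω) - F (X i ω) - deriv F (X i ω) * (X j ω - X i ω)) ∂P|
        = ‖∫ ω, (F (X j ω) - F (X i ω) - deriv F (X i ω) * (X j ω - X i ω)) ∂P‖ :=
          (Real.norm_eq_abs _).symm
      _ ≤ ∫ ω, ‖F (X j ω) - F (X i ω) - deriv F (X i ω) * (X j ω - X i ω)‖ ∂P :=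
          norm_integral_le_integral_norm _
      _ ≤ ∫ ω, K * (X j ω - X i ω)^2 ∂P := by
          refine integral_mono hRint.norm (hsq_int.const_mul K) fun ω => ?_
          rw [Real.norm_eq_abs]
          exact aux_taylor hF hF'' (X i ω) (X j ω)
  rw [hsplit]
  refine habs.trans ?_
  rw [MeasureTheory.integral_const_mul, aux_sq_increment hMart hL4 hij]


lemma aux_sq_condexp (hMart : Martingale X ℱ P) (hL4 : ∀ r, MemLp (X r) 4 P)
    {r M : ℝ} (hrM : r ≤ M) :
    (fun ω => (X r ω)^2) ≤ᵐ[P] P[fun ω => (X M ω)^2|ℱ r] := by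
  have m2 : ∀ u, MemLp (X u) 2 P := fun u => (hL4 u).mono_exponent (by norm_num)
  have hgm : StronglyMeasurable[ℱ r] (X r) := hMart.stronglyAdapted r
  set A : Ω → ℝ := fun ω => (X M ω)^2 with hA
  set B : Ω → ℝ := fun ω => (X r ω)^2 with hB
  set C : Ω → ℝ := fun ω => X r ω * X M ω with hC
  set q : Ω → ℝ := fun ω => (X M ω - X r ω)^2 with hqdef
  have hAint : Integrable A P := (m2 M).integrable_sq
  have hBint : Integrable B P := (m2 r).integrable_sq
  have hCint : Integrable C P := aux_integrable_mul (m2 r) (m2 M)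
  have hC2int : Integrable ((2:ℝ) • C - B) P := ((hCint.smul (2:ℝ)).sub hBint)
  have hq_eq : q = A - ((2:ℝ) • C - B) := by
    funext ω
    simp only [hqdef, hA, hB, hC, Pi.sub_apply, Pi.smul_apply, smul_eq_mul]
    ring
  have hq0 : (0 : Ω → ℝ) ≤ᵐ[P] P[q|ℱ r] :=
    condExp_nonneg (Filter.Eventually.of_forall fun ω => sq_nonneg _)
  have e1 : P[q|ℱ r] =ᵐ[P] P[A|ℱ r] - P[(2:ℝ) • C - B|ℱ r] := by
    rw [hq_eq]
    exact condExp_sub hAint hC2int _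
  have e2 : P[(2:ℝ) • C - B|ℱ r] =ᵐ[P] (2:ℝ) • P[C|ℱ r] - P[B|ℱ r] :=
    (condExp_sub (hCint.smul (2:ℝ)) hBint _).trans
      ((condExp_smul (2:ℝ) C _).sub (EventuallyEq.refl _ _))
  have e3 : P[B|ℱ r] = B := by
    refine condExp_of_stronglyMeasurable (ℱ.le r) ?_ hBint
    simp only [hB, pow_two]
    exact hgm.mul hgm
  have e4 : P[C|ℱ r] =ᵐ[P] B := by
    have hpull : P[X r * X M|ℱ r] =ᵐ[P] X r * P[X M|ℱ r] :=
      condExp_mul_of_stronglyMeasurable_left hgm (by exact hCint) (hMart.integrable M)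
    have hXM : P[X M|ℱ r] =ᵐ[P] X r := hMart.condExp_ae_eq hrM
    refine (hpull.trans ?_)
    filter_upwards [hXM] with ω hω
    simp only [Pi.mul_apply, hω, hB, pow_two]
  filter_upwards [hq0, e1, e2, e4] with ω h0 h1 h2 h4
  simp only [Pi.zero_apply] at h0
  simp only [Pi.sub_apply] at h1 h2
  rw [h1, h2, e3] at h0
  simp only [Pi.smul_apply, smul_eq_mul, h4] at h0
  show B ω ≤ (P[A|ℱ r]) ω
  linarith


lemma aux_tendsto_h (hMart : Martingale X ℱ P) (hL4 : ∀ r, MemLp (X r) 4 P)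
    (hcont : ∀ ω, Continuous fun u => X u ω) {T r : ℝ} {a : ℕ → ℝ}
    (haT : ∀ n, a n ≤ T) (ha : Tendsto a atTop (nhds r)) :
    Tendsto (fun n => ∫ ω, (X (a n) ω)^2 ∂P) atTop (nhds (∫ ω, (X r ω)^2 ∂P)) := by
  have m2 : ∀ u, MemLp (X u) 2 P := fun u => (hL4 u).mono_exponent (by norm_num)
  have sm : ∀ u, StronglyMeasurable (X u) := fun u => (hMart.stronglyAdapted u).mono (ℱ.le u)
  set Z : ℕ → Ω → ℝ := fun n ω => (X (a n) ω - X r ω)^2 with hZdef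
  have hZsm : ∀ n, StronglyMeasurable (Z n) := by
    intro n
    have h : StronglyMeasurable (fun ω => X (a n) ω - X r ω) := (sm (a n)).sub (sm r)
    show StronglyMeasurable fun ω => (X (a n) ω - X r ω)^2
    simp only [pow_two]
    exact h.mul h
  have hZint : ∀ n, Integrable (Z n) P := fun n => ((m2 (a n)).sub (m2 r)).integrable_sq
  have hZ0 : ∀ ω, Tendsto (fun n => Z n ω) atTop (nhds 0) := by
    intro ω
    have hX : Tendsto (fun n => X (a n) ω) atTop (nhds (X r ω)) :=
      ((hcont ω).tendsto r).comp ha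
    have hsub : Tendsto (fun n => X (a n) ω - X r ω) atTop (nhds 0) := by
      have h2 := hX.sub (tendsto_const_nhds (x := X r ω) (f := atTop))
      simpa using h2
    have := hsub.pow 2
    simpa using this
  set XT2 : Ω → ℝ := fun ω => (X T ω)^2 with hXT2
  set A : Ω → ℝ := (2:ℝ) • XT2 with hA
  have hAint : Integrable A P := ((m2 T).integrable_sq).smul (2:ℝ)
  set w : Ω → ℝ := fun ω => 2 * (X r ω)^2 with hw
  have hwint : Integrable w P := ((m2 r).integrable_sq).const_mul 2
  set G : ℕ → Ω → ℝ := (fun n => P[A|ℱ (a n)]) + (fun _ => w) with hG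
  have hGm1 : ∀ n, AEStronglyMeasurable (P[A|ℱ (a n)]) P := fun n =>
    (stronglyMeasurable_condExp.mono (ℱ.le (a n))).aestronglyMeasurable
  have uG : UnifIntegrable G 1 P := by
    refine UnifIntegrable.add ?_ ?_ le_rfl hGm1 (fun _ => hwint.aestronglyMeasurable)
    · exact (hAint.uniformIntegrable_condExp (fun n => ℱ.le (a n))).unifIntegrable
    · exact unifIntegrable_const le_rfl ENNReal.one_ne_top (memLp_one_iff_integrable.2 hwint)
  have hbound : ∀ n, ∀ᵐ ω ∂P, Z n ω ≤ G n ω := by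
    intro n
    have hjensen := aux_sq_condexp hMart hL4 (r := a n) (M := T) (haT n)
    have hsmul : P[A|ℱ (a n)] =ᵐ[P] (2:ℝ) • P[XT2|ℱ (a n)] := condExp_smul (2:ℝ) XT2 _
    filter_upwards [hjensen, hsmul] with ω h1 h2
    have hZle : Z n ω ≤ 2 * (X (a n) ω)^2 + 2 * (X r ω)^2 := by
      simp only [hZdef]
      nlinarith [sq_nonneg (X (a n) ω + X r ω)]
    have h1' : (X (a n) ω)^2 ≤ (P[XT2|ℱ (a n)]) ω := h1
    have hGval : G n ω = (P[A|ℱ (a n)]) ω + w ω := rfl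
    rw [hGval, h2]
    simp only [Pi.smul_apply, smul_eq_mul, hw]
    linarith
  have uZ : UnifIntegrable Z 1 P := by
    intro ε hε
    obtain ⟨δ, hδ, hGd⟩ := uG hε
    refine ⟨δ, hδ, fun n s hs hμs => ?_⟩
    refine le_trans (eLpNorm_mono_ae ?_) (hGd n s hs hμs)
    filter_upwards [hbound n] with ω hω
    by_cases hωs : ω ∈ s
    · simp only [Set.indicator_of_mem hωs]
      have h0 : (0:ℝ) ≤ Z n ω := sq_nonneg _
      rw [Real.norm_eq_abs, Real.norm_eq_abs, abs_of_nonneg h0]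
      exact hω.trans (le_abs_self _)
    · simp [Set.indicator_of_notMem hωs]
  have vitali : Tendsto (fun n => eLpNorm (Z n - 0) 1 P) atTop (nhds 0) := by
    refine tendsto_Lp_finite_of_tendsto_ae le_rfl ENNReal.one_ne_top
      (fun n => (hZsm n).aestronglyMeasurable) (MemLp.zero) uZ ?_
    refine Filter.Eventually.of_forall fun ω => ?_
    simpa using hZ0 ω
  have hreal : Tendsto (fun n => (eLpNorm (Z n) 1 P).toReal) atTop (nhds 0) := by
    have h1 : Tendsto (fun n => eLpNorm (Z n) 1 P) atTop (nhds 0) := by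
      simpa [sub_zero] using vitali
    have := (ENNReal.tendsto_toReal (a := 0) (by simp)).comp h1
    simpa [Function.comp_def] using this
  have heq : ∀ n, ∫ ω, Z n ω ∂P = (eLpNorm (Z n) 1 P).toReal := by
    intro n
    rw [eLpNorm_one_eq_lintegral_enorm, ← integral_norm_eq_lintegral_enorm
      (hZsm n).aestronglyMeasurable]
    exact integral_congr_ae (Filter.Eventually.of_forall fun ω =>
      (Real.norm_of_nonneg (sq_nonneg _)).symm)
  have hdiff : ∀ n, |(∫ ω, (X (a n) ω)^2 ∂P) - ∫ ω, (X r ω)^2 ∂P| = ∫ ω, Z n ω ∂P := by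
    intro n
    rcases le_total (a n) r with h | h
    · have h1 := aux_sq_increment hMart hL4 h
      have h2 : ∫ ω, Z n ω ∂P = ∫ ω, (X r ω - X (a n) ω)^2 ∂P :=
        integral_congr_ae (Filter.Eventually.of_forall fun ω => by simp [hZdef]; ring)
      have h3 : (0:ℝ) ≤ ∫ ω, (X r ω - X (a n) ω)^2 ∂P := integral_nonneg fun ω => sq_nonneg _
      rw [h2, h1, abs_of_nonpos (by linarith)]
      ring
    · have h1 := aux_sq_increment hMart hL4 h
      have h3 : (0:ℝ) ≤ ∫ ω, (X (a n) ω - X r ω)^2 ∂P := integral_nonneg fun ω => sq_nonneg _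
      rw [show ∫ ω, Z n ω ∂P = ∫ ω, (X (a n) ω - X r ω)^2 ∂P from rfl, h1,
        abs_of_nonneg (by linarith)]
  have hzero : Tendsto (fun n => (∫ ω, (X (a n) ω)^2 ∂P) - ∫ ω, (X r ω)^2 ∂P) atTop (nhds 0) := by
    refine squeeze_zero_norm (fun n => ?_) hreal
    rw [Real.norm_eq_abs, hdiff n, heq n]
  have := hzero.add_const (∫ ω, (X r ω)^2 ∂P)
  simpa using this


end AuxSt19



/-- Let `X̃` be a continuous martingale with fourth moments and `F` a `C²`
function with bounded derivatives, `K = (1/2) sup|F''|`. Then along a sequence of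
partitions of `[t,s]` with mesh `→ 0`, the time-reversed increment sums satisfy
`∑_j |E[F(X̃_{T-t_{j+1}}) - F(X̃_{T-t_j})]|² ≤ K² ∑_j E[|X̃_{T-t_{j+1}} - X̃_{T-t_j}|⁴]`,
and hence tend to `0` since the expected quartic variation of the continuous `L⁴`
martingale `X̃` vanishes. -/
theorem terminal_function_increment_sums_vanish
    {Ω : Type*} {m0 : MeasurableSpace Ω} (P : Measure Ω) [IsProbabilityMeasure P]
    (ℱ : Filtration ℝ m0) (T : ℝ) (hT : 0 < T)
    (X : ℝ → Ω → ℝ)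
    (hMart : Martingale X ℱ P)
    (hL4 : ∀ r : ℝ, MemLp (X r) 4 P)
    (hcont : ∀ ω, Continuous fun r => X r ω)
    (F : ℝ → ℝ) (hF : ContDiff ℝ 2 F)
    (cF' : ℝ) (hF' : ∀ y, |deriv F y| ≤ cF')
    (K : ℝ) (hK : 0 ≤ K) (hF'' : ∀ y, |deriv (deriv F) y| ≤ 2 * K)
    (hFint : ∀ r : ℝ, Integrable (fun ω => F (X r ω)) P)
    -- partitions of `[t,s] ⊆ [0,T]` with mesh tending to zero
    (t s : ℝ) (hts : 0 ≤ t) (htsle : t ≤ s) (hsT : s ≤ T)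
    (k : ℕ → ℕ) (u : ℕ → ℕ → ℝ)
    (hmono : ∀ n j, u n j ≤ u n (j + 1))
    (hstart : ∀ n, u n 0 = t)
    (hend : ∀ n j, k n ≤ j → u n j = s)
    (hmesh : ∀ ε > (0:ℝ), ∃ N, ∀ n ≥ N, ∀ j, u n (j + 1) - u n j ≤ ε) :
    (∀ n, ∑ j ∈ Finset.range (k n),
        |∫ ω, (F (X (T - u n (j + 1)) ω) - F (X (T - u n j) ω)) ∂P| ^ 2 ≤
      K ^ 2 * ∑ j ∈ Finset.range (k n),
        ∫ ω, |X (T - u n (j + 1)) ω - X (T - u n j) ω| ^ 4 ∂P) ∧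
    Tendsto (fun n => ∑ j ∈ Finset.range (k n),
        |∫ ω, (F (X (T - u n (j + 1)) ω) - F (X (T - u n j) ω)) ∂P| ^ 2)
      atTop (nhds 0) := by
  have humono : ∀ n, Monotone (u n) := fun n => monotone_nat_of_le_succ (hmono n)
  have hmem : ∀ n j, j ≤ k n → t ≤ u n j ∧ u n j ≤ s := by
    intro n j hj
    constructor
    · have := humono n (Nat.zero_le j); rwa [hstart n] at this
    · have := humono n hj; rwa [hend n (k n) le_rfl] at this
  -- flip of the integral
  have hflip : ∀ i j : ℝ, |∫ ω, (F (X i ω) - F (X j ω)) ∂P| = |∫ ω, (F (X j ω) - F (X i ω)) ∂P| := by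
    intro i j
    have : ∫ ω, (F (X i ω) - F (X j ω)) ∂P = - ∫ ω, (F (X j ω) - F (X i ω)) ∂P := by
      rw [← integral_neg]
      exact integral_congr_ae (Filter.Eventually.of_forall fun ω => by ring)
    rw [this, abs_neg]
  -- PART 1
  have part1 : ∀ n, ∑ j ∈ Finset.range (k n),
      |∫ ω, (F (X (T - u n (j + 1)) ω) - F (X (T - u n j) ω)) ∂P| ^ 2 ≤
      K ^ 2 * ∑ j ∈ Finset.range (k n),
        ∫ ω, |X (T - u n (j + 1)) ω - X (T - u n j) ω| ^ 4 ∂P := by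
    intro n
    rw [Finset.mul_sum]
    refine Finset.sum_le_sum ?_
    intro j hj
    have hij : T - u n (j+1) ≤ T - u n j := by have := hmono n j; linarith
    set i : ℝ := T - u n (j+1) with hi
    set jj : ℝ := T - u n j with hjj
    have h1 := aux_expF hMart hL4 hF hF' hF'' hFint hij
    rw [← hflip i jj] at h1
    have h2 := aux_sq_increment hMart hL4 hij
    have hd0 : (0:ℝ) ≤ ∫ ω, (X jj ω - X i ω)^2 ∂P := integral_nonneg fun ω => sq_nonneg _
    -- MemLp of the squared increment
    have m4 : MemLp (fun ω => X jj ω - X i ω) 4 P := (hL4 jj).sub (hL4 i)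
    have hint4 : Integrable (fun ω => (X jj ω - X i ω)^4) P := by
      have h4 := m4.integrable_norm_rpow (by norm_num) (by norm_num)
      refine h4.congr (Filter.Eventually.of_forall fun ω => ?_)
      show ‖X jj ω - X i ω‖ ^ ((4:ℝ≥0∞).toReal) = (X jj ω - X i ω)^4
      rw [show ((4:ℝ≥0∞).toReal) = ((4:ℕ):ℝ) by norm_num, Real.rpow_natCast,
        Real.norm_eq_abs, ← abs_pow, abs_of_nonneg (by positivity)]
    have memY : MemLp (fun ω => (X jj ω - X i ω)^2) 2 P := by
      rw [memLp_two_iff_integrable_sq]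
      · refine hint4.congr (Filter.Eventually.of_forall fun ω => by ring_nf)
      · exact (((hMart.stronglyAdapted jj).mono (ℱ.le jj)).sub
          ((hMart.stronglyAdapted i).mono (ℱ.le i))).aestronglyMeasurable.pow 2
    have hjen := aux_jensen memY
    have hsq : |∫ ω, (F (X i ω) - F (X jj ω)) ∂P| ^ 2
        ≤ (K * ((∫ ω, (X jj ω)^2 ∂P) - ∫ ω, (X i ω)^2 ∂P))^2 :=
      pow_le_pow_left₀ (abs_nonneg _) h1 2
    have hlast : ∫ ω, ((X jj ω - X i ω)^2)^2 ∂P = ∫ ω, |X i ω - X jj ω|^4 ∂P := by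
      refine integral_congr_ae (Filter.Eventually.of_forall fun ω => ?_)
      have habs : |X i ω - X jj ω|^4 = (X i ω - X jj ω)^4 := by
        rw [← abs_pow, abs_of_nonneg (by positivity)]
      show ((X jj ω - X i ω)^2)^2 = |X i ω - X jj ω|^4
      rw [habs]; ring
    calc |∫ ω, (F (X i ω) - F (X jj ω)) ∂P| ^ 2
        ≤ (K * ((∫ ω, (X jj ω)^2 ∂P) - ∫ ω, (X i ω)^2 ∂P))^2 := hsq
      _ = K^2 * (∫ ω, (X jj ω - X i ω)^2 ∂P)^2 := by rw [h2]; ring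
      _ ≤ K^2 * ∫ ω, ((X jj ω - X i ω)^2)^2 ∂P :=
          mul_le_mul_of_nonneg_left hjen (sq_nonneg K)
      _ = K^2 * ∫ ω, |X i ω - X jj ω|^4 ∂P := by rw [hlast]
  refine ⟨part1, ?_⟩
  -- PART 2
  set hh : ℝ → ℝ := fun v => ∫ ω, (X (min v T) ω)^2 ∂P with hhdef
  have hhval : ∀ v, v ≤ T → hh v = ∫ ω, (X v ω)^2 ∂P := by
    intro v hv
    simp only [hhdef, min_eq_left hv]
  have hca : ∀ v : ℝ, ContinuousAt hh v := by
    intro v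
    rw [ContinuousAt, tendsto_iff_seq_tendsto]
    intro x hx
    have hmin : Tendsto (fun n => min (x n) T) atTop (nhds (min v T)) :=
      hx.min tendsto_const_nhds
    exact aux_tendsto_h hMart hL4 hcont (fun n => min_le_right _ _) hmin
  have hUC : UniformContinuousOn hh (Set.Icc (T - s) (T - t)) :=
    isCompact_Icc.uniformContinuousOn_of_continuous (fun v _ => (hca v).continuousWithinAt)
  rw [Metric.uniformContinuousOn_iff] at hUC
  set D : ℝ := hh (T - t) - hh (T - s) with hD
  have hD0 : 0 ≤ D := by
    rw [hD, hhval _ (by linarith), hhval _ (by linarith)]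
    have := aux_h_mono hMart hL4 (show T - s ≤ T - t by linarith)
    linarith
  rw [Metric.tendsto_atTop]
  intro ε hε
  set ε' : ℝ := ε / (K^2 * D + 1) with hε'
  have hden : 0 < K^2 * D + 1 := by positivity
  have hε'pos : 0 < ε' := div_pos hε hden
  obtain ⟨δ, hδpos, hδ⟩ := hUC ε' hε'pos
  obtain ⟨N, hN⟩ := hmesh (δ/2) (half_pos hδpos)
  refine ⟨N, fun n hn => ?_⟩
  have hSnn : 0 ≤ ∑ j ∈ Finset.range (k n),
      |∫ ω, (F (X (T - u n (j + 1)) ω) - F (X (T - u n j) ω)) ∂P| ^ 2 :=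
    Finset.sum_nonneg fun j _ => sq_nonneg _
  rw [Real.dist_eq, sub_zero, abs_of_nonneg hSnn]
  have hstep : ∀ j ∈ Finset.range (k n),
      |∫ ω, (F (X (T - u n (j + 1)) ω) - F (X (T - u n j) ω)) ∂P| ^ 2 ≤
      K^2 * ε' * (hh (T - u n j) - hh (T - u n (j+1))) := by
    intro j hj
    have hjk : j < k n := Finset.mem_range.mp hj
    have hmem1 := hmem n j hjk.le
    have hmem2 := hmem n (j+1) hjk
    have hij : T - u n (j+1) ≤ T - u n j := by have := hmono n j; linarith
    have hiT : T - u n (j+1) ≤ T := by linarith [hmem2.1]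
    have hjjT : T - u n j ≤ T := by linarith [hmem1.1]
    have hb : |∫ ω, (F (X (T - u n (j+1)) ω) - F (X (T - u n j) ω)) ∂P| ≤
        K * (hh (T - u n j) - hh (T - u n (j+1))) := by
      rw [hflip, hhval _ hjjT, hhval _ hiT]
      exact aux_expF hMart hL4 hF hF' hF'' hFint hij
    have hΔ0 : 0 ≤ hh (T - u n j) - hh (T - u n (j+1)) := by
      rw [hhval _ hjjT, hhval _ hiT]
      have := aux_h_mono hMart hL4 hij
      linarith
    have hΔε : hh (T - u n j) - hh (T - u n (j+1)) < ε' := by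
      have hmemIcc1 : T - u n j ∈ Set.Icc (T - s) (T - t) := by
        constructor <;> [linarith [hmem1.2]; linarith [hmem1.1]]
      have hmemIcc2 : T - u n (j+1) ∈ Set.Icc (T - s) (T - t) := by
        constructor <;> [linarith [hmem2.2]; linarith [hmem2.1]]
      have hdist : dist (T - u n j) (T - u n (j+1)) < δ := by
        rw [Real.dist_eq]
        have h1 := hN n hn j
        have h2 := hmono n j
        rw [abs_of_nonneg (by linarith)]
        linarith
      have := hδ _ hmemIcc1 _ hmemIcc2 hdist
      rw [Real.dist_eq] at this
      calc hh (T - u n j) - hh (T - u n (j+1))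
          ≤ |hh (T - u n j) - hh (T - u n (j+1))| := le_abs_self _
        _ < ε' := this
    have h1 : |∫ ω, (F (X (T - u n (j+1)) ω) - F (X (T - u n j) ω)) ∂P|^2
        ≤ (K * (hh (T - u n j) - hh (T - u n (j+1))))^2 :=
      pow_le_pow_left₀ (abs_nonneg _) hb 2
    have h2 : (K * (hh (T - u n j) - hh (T - u n (j+1))))^2
        ≤ K^2 * ε' * (hh (T - u n j) - hh (T - u n (j+1))) := by
      have h3 : (hh (T - u n j) - hh (T - u n (j+1))) * (hh (T - u n j) - hh (T - u n (j+1)))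
          ≤ ε' * (hh (T - u n j) - hh (T - u n (j+1))) :=
        mul_le_mul_of_nonneg_right hΔε.le hΔ0
      nlinarith [sq_nonneg K]
    exact h1.trans h2
  calc ∑ j ∈ Finset.range (k n),
      |∫ ω, (F (X (T - u n (j + 1)) ω) - F (X (T - u n j) ω)) ∂P| ^ 2
      ≤ ∑ j ∈ Finset.range (k n), K^2 * ε' * (hh (T - u n j) - hh (T - u n (j+1))) :=
        Finset.sum_le_sum hstep
    _ = K^2 * ε' * ∑ j ∈ Finset.range (k n), (hh (T - u n j) - hh (T - u n (j+1))) := by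
        rw [Finset.mul_sum]
    _ = K^2 * ε' * (hh (T - u n 0) - hh (T - u n (k n))) := by
        rw [Finset.sum_range_sub' (fun j => hh (T - u n j))]
    _ = K^2 * ε' * D := by rw [hstart n, hend n (k n) le_rfl]
    _ < ε := by
        have h1 : K^2 * D < K^2 * D + 1 := lt_add_one _
        have h2 : (K^2 * D) * ε' < (K^2 * D + 1) * ε' :=
          mul_lt_mul_of_pos_right h1 hε'pos
        have h3 : (K^2 * D + 1) * ε' = ε := by
          rw [hε', mul_div_cancel₀ _ (ne_of_gt hden)]
        linarith [h2, h3, show K^2 * ε' * D = (K^2 * D) * ε' from by ring]
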